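/- Suppose that the index set {1, …, n} is partitioned into two nonempty disjoint sets S₀ and S₋ such that for all x ∈ Ω: (1) c_k(J(x)) ≤ 0 for every k ∈ S₀; (2) c_j(J(x)) < 0 for every j ∈ S₋; and (3) for every i ∈ S₀ there exists an index z = z(i) ∈ S₋ such that J(x)_{z i} > 0. Then the system ẋ = f(x) is SOST on Ω with respect to the L¹ norm: for every ε > 0 and every τ > 0 there exists ℓ = ℓ(τ, ε) > 0 such that for any t₁ ≥ 0, any two solutions u, v : [t₁, ∞) → Ω of ẋ = f(x), and any t₂ ≥ t₁, one has ‖u(t₂+τ) − v(t₂+τ)‖₁ ≤ (1+ε)·exp(−ℓ(t₂−t₁))·‖u(t₁) − v(t₁)‖₁. -/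

import Mathlib

open Filter Topology

/-- The Jacobian matrix of `f` at `x`: `(jac f x) i j = ∂f_i/∂x_j (x)`. -/
noncomputable def jac {n : ℕ} (f : (Fin n → ℝ) → (Fin n → ℝ)) (x : Fin n → ℝ) :
    Matrix (Fin n) (Fin n) ℝ :=
  fun i j => fderiv ℝ f x (Pi.single j 1) i

/-- `cCol A j = A_{jj} + Σ_{i ≠ j} |A_{ij}|`: the `j`-th column sum of `A` with the
off-diagonal entries replaced by their absolute values. -/
def cCol {n : ℕ} (A : Matrix (Fin n) (Fin n) ℝ) (j : Fin n) : ℝ :=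
  A j j + ∑ i ∈ Finset.univ.erase j, |A i j|

section Aux
variable {n : ℕ}

lemma clm_apply_eq_sum (L : (Fin n → ℝ) →L[ℝ] (Fin n → ℝ)) (w : Fin n → ℝ) (i : Fin n) :
    L w i = ∑ j, L (Pi.single j 1) i * w j := by
  have hw : w = ∑ j, w j • (Pi.single j 1 : Fin n → ℝ) := by
    ext k; simp [Pi.single_apply]
  conv_lhs => rw [hw]
  rw [map_sum]
  simp [Finset.sum_apply, mul_comm]

lemma jac_continuous {n : ℕ} {f : (Fin n → ℝ) → (Fin n → ℝ)} (hf : ContDiff ℝ 1 f)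
    (i j : Fin n) : Continuous fun x => jac f x i j := by
  have h1 : Continuous fun x => fderiv ℝ f x := hf.continuous_fderiv one_ne_zero
  have h2 : Continuous fun (L : (Fin n → ℝ) →L[ℝ] (Fin n → ℝ)) => L (Pi.single j 1) i :=
    (ContinuousLinearMap.continuous ((ContinuousLinearMap.proj i : ((Fin n → ℝ)) →L[ℝ] ℝ).comp
      (ContinuousLinearMap.apply ℝ (Fin n → ℝ) (Pi.single j 1))))
  exact h2.comp h1

lemma mvt_integral {n : ℕ} {f : (Fin n → ℝ) → (Fin n → ℝ)} (hf : ContDiff ℝ 1 f)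
    (a b : Fin n → ℝ) (i : Fin n) :
    f b i - f a i = ∫ s in (0:ℝ)..1, (fderiv ℝ f (a + s • (b - a))) (b - a) i := by
  set γ : ℝ → (Fin n → ℝ) := fun s => a + s • (b - a) with hγdef
  have hγ : ∀ s : ℝ, HasDerivAt γ (b - a) s := by
    intro s
    have h1 : HasDerivAt (fun s : ℝ => s • (b - a)) ((1:ℝ) • (b - a)) s :=
      (hasDerivAt_id s).smul_const (b - a)
    rw [one_smul] at h1
    exact h1.const_add a
  have hF : ∀ s : ℝ, HasDerivAt (fun s => f (γ s) i)
      ((fderiv ℝ f (γ s)) (b - a) i) s := by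
    intro s
    have hd : HasFDerivAt f (fderiv ℝ f (γ s)) (γ s) :=
      (hf.differentiable one_ne_zero (γ s)).hasFDerivAt
    have h2 : HasDerivAt (fun s => f (γ s)) ((fderiv ℝ f (γ s)) (b - a)) s :=
      hd.comp_hasDerivAt s (hγ s)
    exact ((ContinuousLinearMap.proj (R := ℝ) (φ := fun _ : Fin n => ℝ)
      i).hasFDerivAt.comp_hasDerivAt s h2)
  have hcont : Continuous fun s : ℝ => (fderiv ℝ f (γ s)) (b - a) i := by
    have h1 : Continuous fun x => fderiv ℝ f x := hf.continuous_fderiv one_ne_zero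
    have hγc : Continuous γ := by
      apply continuous_const.add (continuous_id.smul continuous_const)
    have : Continuous fun s : ℝ => (fderiv ℝ f (γ s)) (b - a) :=
      (ContinuousLinearMap.apply ℝ (Fin n → ℝ) (b - a)).continuous.comp (h1.comp hγc)
    exact (continuous_apply i).comp this
  have := intervalIntegral.integral_eq_sub_of_hasDerivAt
    (f := fun s => f (γ s) i) (a := (0:ℝ)) (b := 1)
    (fun s _ => hF s) (hcont.intervalIntegrable 0 1)
  rw [this]
  simp [hγdef]

lemma key_ineq {n : ℕ} (A : Matrix (Fin n) (Fin n) ℝ) (p : Fin n → ℝ) (hp : ∀ i, 0 ≤ p i)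
    (ℓ h : ℝ) (hh : 0 ≤ h) (hA : ∀ i, 0 ≤ 1 + h * A i i)
    (hcol : ∀ j, p j * A j j + ∑ i ∈ Finset.univ.erase j, p i * |A i j| ≤ -ℓ * p j)
    (w : Fin n → ℝ) :
    ∑ i, p i * |w i + h * ∑ j, A i j * w j| ≤ (1 - h * ℓ) * ∑ i, p i * |w i| := by
  have step1 : ∀ i, |w i + h * ∑ j, A i j * w j| ≤
      (1 + h * A i i) * |w i| + h * ∑ j ∈ Finset.univ.erase i, |A i j| * |w j| := by
    intro i
    have hsplit : (∑ j, A i j * w j)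
        = A i i * w i + ∑ j ∈ Finset.univ.erase i, A i j * w j :=
      (Finset.add_sum_erase _ _ (Finset.mem_univ i)).symm
    have : w i + h * ∑ j, A i j * w j
        = (1 + h * A i i) * w i + h * ∑ j ∈ Finset.univ.erase i, A i j * w j := by
      rw [hsplit]; ring
    rw [this]
    refine (abs_add_le _ _).trans ?_
    gcongr
    · rw [abs_mul, abs_of_nonneg (hA i)]
    · rw [abs_mul, abs_of_nonneg hh]
      gcongr
      refine (Finset.abs_sum_le_sum_abs _ _).trans ?_
      apply le_of_eq
      exact Finset.sum_congr rfl fun j _ => abs_mul _ _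
  have swap : ∑ i, ∑ j ∈ Finset.univ.erase i, h * (p i * |A i j| * |w j|)
      = ∑ j, ∑ i ∈ Finset.univ.erase j, h * (p i * |A i j| * |w j|) := by
    refine Finset.sum_comm' ?_
    intro x y
    simp only [Finset.mem_univ, Finset.mem_erase, true_and, and_true, ne_comm]
  calc ∑ i, p i * |w i + h * ∑ j, A i j * w j|
      ≤ ∑ i, p i * ((1 + h * A i i) * |w i|
          + h * ∑ j ∈ Finset.univ.erase i, |A i j| * |w j|) := by
        apply Finset.sum_le_sum
        intro i _
        exact mul_le_mul_of_nonneg_left (step1 i) (hp i)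
    _ = ∑ i, (p i * (1 + h * A i i) * |w i|
          + ∑ j ∈ Finset.univ.erase i, h * (p i * |A i j| * |w j|)) := by
        refine Finset.sum_congr rfl fun i _ => ?_
        rw [mul_add, ← mul_assoc, Finset.mul_sum, Finset.mul_sum]
        congr 1
        exact Finset.sum_congr rfl fun j _ => by ring
    _ = ∑ i, p i * (1 + h * A i i) * |w i|
        + ∑ i, ∑ j ∈ Finset.univ.erase i, h * (p i * |A i j| * |w j|) :=
        Finset.sum_add_distrib
    _ = ∑ j, p j * (1 + h * A j j) * |w j|
        + ∑ j, ∑ i ∈ Finset.univ.erase j, h * (p i * |A i j| * |w j|) := by rw [swap]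
    _ = ∑ j, (p j + h * (p j * A j j + ∑ i ∈ Finset.univ.erase j, p i * |A i j|)) * |w j| := by
        rw [← Finset.sum_add_distrib]
        refine Finset.sum_congr rfl fun j _ => ?_
        have : ∑ i ∈ Finset.univ.erase j, h * (p i * |A i j| * |w j|)
            = h * (∑ i ∈ Finset.univ.erase j, p i * |A i j|) * |w j| := by
          rw [mul_assoc, Finset.sum_mul, Finset.mul_sum]
        rw [this]
        ring
    _ ≤ ∑ j, (p j + h * (-ℓ * p j)) * |w j| := by
        apply Finset.sum_le_sum
        intro j _
        apply mul_le_mul_of_nonneg_right _ (abs_nonneg _)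
        nlinarith [hcol j]
    _ = (1 - h * ℓ) * ∑ j, p j * |w j| := by
        rw [Finset.mul_sum]
        exact Finset.sum_congr rfl fun j _ => by ring

lemma core_step {f : (Fin n → ℝ) → (Fin n → ℝ)} (hf : ContDiff ℝ 1 f)
    {Ω : Set (Fin n → ℝ)} (hconv : Convex ℝ Ω)
    (p : Fin n → ℝ) (hp : ∀ i, 0 ≤ p i) (ℓ M : ℝ) (hM0 : 0 ≤ M)
    (hMd : ∀ x ∈ Ω, ∀ i j, |jac f x i j| ≤ M)
    (hcol : ∀ x ∈ Ω, ∀ j, p j * jac f x j j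
      + ∑ i ∈ Finset.univ.erase j, p i * |jac f x i j| ≤ -ℓ * p j)
    {a b : Fin n → ℝ} (ha : a ∈ Ω) (hb : b ∈ Ω) {h : ℝ} (hh0 : 0 ≤ h)
    (hh1 : h * (M + 1) ≤ 1) :
    ∑ i, p i * |(a i - b i) + h * (f a i - f b i)|
      ≤ (1 - h * ℓ) * ∑ i, p i * |a i - b i| := by
  set w : Fin n → ℝ := fun i => a i - b i with hwdef
  set γ : ℝ → (Fin n → ℝ) := fun s => b + s • (a - b) with hγdef
  have hγc : Continuous γ := continuous_const.add (continuous_id.smul continuous_const)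
  have hmem : ∀ s ∈ Set.Icc (0:ℝ) 1, γ s ∈ Ω := by
    intro s hs
    have : γ s = (1 - s) • b + s • a := by
      ext i; simp [hγdef, Pi.add_apply, smul_eq_mul]; ring
    rw [this]
    exact hconv hb ha (by linarith [hs.2]) hs.1 (by ring)
  set F : Fin n → ℝ → ℝ := fun i s => w i + h * ∑ j, jac f (γ s) i j * w j with hFdef
  have hFc : ∀ i, Continuous (F i) := by
    intro i
    apply continuous_const.add
    apply continuous_const.mul
    apply continuous_finset_sum
    intro j _
    exact (((jac_continuous hf i j).comp hγc).mul continuous_const)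
  have hrep : ∀ i, (a i - b i) + h * (f a i - f b i) = ∫ s in (0:ℝ)..1, F i s := by
    intro i
    simp only [hFdef]
    have h1 := mvt_integral hf b a i
    have h2 : ∀ s : ℝ, (fderiv ℝ f (γ s)) (a - b) i = ∑ j, jac f (γ s) i j * w j := by
      intro s
      rw [clm_apply_eq_sum]
      exact Finset.sum_congr rfl fun j _ => by simp [jac, hwdef, Pi.sub_apply]
    have hint2 : IntervalIntegrable (fun s : ℝ => h * ∑ j, jac f (γ s) i j * w j)
        MeasureTheory.volume 0 1 :=
      (continuous_const.mul (continuous_finset_sum _ fun j _ =>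
        ((jac_continuous hf i j).comp hγc).mul continuous_const)).intervalIntegrable 0 1
    have hadd : (∫ s in (0:ℝ)..1, (w i + h * ∑ j, jac f (γ s) i j * w j))
        = (∫ _ in (0:ℝ)..1, w i) + ∫ s in (0:ℝ)..1, h * ∑ j, jac f (γ s) i j * w j :=
      intervalIntegral.integral_add intervalIntegrable_const hint2
    rw [hadd, intervalIntegral.integral_const, intervalIntegral.integral_const_mul]
    have h3 : (∫ s in (0:ℝ)..1, ∑ j, jac f (γ s) i j * w j) = f a i - f b i := by
      rw [show (fun s => ∑ j, jac f (γ s) i j * w j)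
          = fun s => (fderiv ℝ f (γ s)) (a - b) i from funext fun s => (h2 s).symm]
      exact h1.symm
    rw [h3]
    simp [hwdef]
  calc ∑ i, p i * |(a i - b i) + h * (f a i - f b i)|
      ≤ ∑ i, ∫ s in (0:ℝ)..1, p i * |F i s| := by
        apply Finset.sum_le_sum
        intro i _
        rw [hrep i]
        calc p i * |∫ s in (0:ℝ)..1, F i s|
            ≤ p i * ∫ s in (0:ℝ)..1, |F i s| :=
              mul_le_mul_of_nonneg_left
                (intervalIntegral.abs_integral_le_integral_abs zero_le_one) (hp i)
          _ = ∫ s in (0:ℝ)..1, p i * |F i s| := by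
              rw [intervalIntegral.integral_const_mul]
        -- redundant? fix below
    _ = ∫ s in (0:ℝ)..1, ∑ i, p i * |F i s| := by
        rw [intervalIntegral.integral_finset_sum]
        intro i _
        exact (continuous_const.mul (hFc i).abs).intervalIntegrable 0 1
    _ ≤ ∫ s in (0:ℝ)..1, (1 - h * ℓ) * ∑ i, p i * |w i| := by
        apply intervalIntegral.integral_mono_on zero_le_one
        · exact (continuous_finset_sum _ fun i _ =>
            continuous_const.mul (hFc i).abs).intervalIntegrable 0 1
        · exact intervalIntegrable_const
        · intro s hs
          apply key_ineq _ p hp ℓ h hh0 _ _ w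
          · intro i
            have := hMd (γ s) (hmem s hs) i i
            have h4 : -(h * M) ≤ h * jac f (γ s) i i := by
              have := (abs_le.1 this).1
              nlinarith
            nlinarith
          · intro j
            exact hcol (γ s) (hmem s hs) j
    _ = (1 - h * ℓ) * ∑ i, p i * |w i| := by simp
  -- done

lemma gronwall_decay {f : (Fin n → ℝ) → (Fin n → ℝ)} (hf : ContDiff ℝ 1 f)
    {Ω : Set (Fin n → ℝ)} (hconv : Convex ℝ Ω)
    (p : Fin n → ℝ) (hp : ∀ i, 0 ≤ p i) (ℓ M : ℝ) (hM0 : 0 ≤ M)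
    (hMd : ∀ x ∈ Ω, ∀ i j, |jac f x i j| ≤ M)
    (hcol : ∀ x ∈ Ω, ∀ j, p j * jac f x j j
      + ∑ i ∈ Finset.univ.erase j, p i * |jac f x i j| ≤ -ℓ * p j)
    (t₁ T : ℝ) (hT : t₁ ≤ T) (u v : ℝ → (Fin n → ℝ))
    (huΩ : ∀ t ≥ t₁, u t ∈ Ω) (hu : ∀ t ≥ t₁, HasDerivWithinAt u (f (u t)) (Set.Ici t₁) t)
    (hvΩ : ∀ t ≥ t₁, v t ∈ Ω) (hv : ∀ t ≥ t₁, HasDerivWithinAt v (f (v t)) (Set.Ici t₁) t) :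
    ∑ i, p i * |u T i - v T i|
      ≤ (∑ i, p i * |u t₁ i - v t₁ i|) * Real.exp (-ℓ * (T - t₁)) := by
  set g : ℝ → ℝ := fun t => ∑ i, p i * |u t i - v t i| with hgdef
  have hui : ∀ i, ∀ t ≥ t₁, HasDerivWithinAt (fun z => u z i - v z i)
      (f (u t) i - f (v t) i) (Set.Ici t₁) t := by
    intro i t ht
    have h1 : HasDerivWithinAt (fun z => u z i) (f (u t) i) (Set.Ici t₁) t :=
      (ContinuousLinearMap.proj (R := ℝ) (φ := fun _ : Fin n => ℝ)
        i).hasFDerivAt.comp_hasDerivWithinAt t (hu t ht)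
    have h2 : HasDerivWithinAt (fun z => v z i) (f (v t) i) (Set.Ici t₁) t :=
      (ContinuousLinearMap.proj (R := ℝ) (φ := fun _ : Fin n => ℝ)
        i).hasFDerivAt.comp_hasDerivWithinAt t (hv t ht)
    exact h1.sub h2
  have hgcont : ContinuousOn g (Set.Icc t₁ T) := by
    apply continuousOn_finset_sum
    intro i _
    apply ContinuousOn.mul continuousOn_const
    apply ContinuousOn.abs
    intro t ht
    exact (((hui i t ht.1).continuousWithinAt).mono (Set.Icc_subset_Ici_self))
  have key := le_gronwallBound_of_liminf_deriv_right_le (f := g)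
    (f' := fun t => -ℓ * g t) (δ := g t₁) (K := -ℓ) (ε := 0) (a := t₁) (b := T)
    hgcont ?_ le_rfl (fun x _ => by simp)
  · have := key T (Set.right_mem_Icc.2 hT)
    rwa [gronwallBound_ε0] at this
  · -- liminf condition
    intro t ht r hr
    have ht1 : t₁ ≤ t := ht.1
    set d : Fin n → ℝ := fun i => f (u t) i - f (v t) i with hddef
    set E : ℝ → ℝ := fun z => ∑ i, p i * |u z i - v z i - (u t i - v t i) - (z - t) * d i|
      with hEdef
    have hEpos : ∀ z, 0 ≤ E z :=
      fun z => Finset.sum_nonneg fun i _ => mul_nonneg (hp i) (abs_nonneg _)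
    have hmono : 𝓝[>] t ≤ 𝓝[Set.Ici t₁] t :=
      nhdsWithin_mono t (fun z hz => le_trans ht1 (le_of_lt hz))
    have hE : (fun z => E z) =o[𝓝[>] t] fun z => z - t := by
      simp only [hEdef]
      apply Asymptotics.IsLittleO.fun_sum
      intro i _
      have o1 := (hasDerivWithinAt_iff_isLittleO.1 (hui i t ht1))
      have o2 : (fun z => u z i - v z i - (u t i - v t i) - (z - t) * d i)
          =o[𝓝[>] t] fun z => z - t := by
        simpa [smul_eq_mul, hddef] using o1.mono hmono
      exact (o2.abs_left).const_mul_left (p i)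
    set c : ℝ := (r - (-ℓ * g t)) / 2 with hcdef
    have hr' : -ℓ * g t < r := hr
    have hc : 0 < c := by rw [hcdef]; linarith
    have ev1 : ∀ᶠ z in 𝓝[>] t, E z ≤ c * (z - t) := by
      filter_upwards [Asymptotics.isLittleO_iff.1 hE hc, self_mem_nhdsWithin] with z hz hz2
      rw [Set.mem_Ioi] at hz2
      rw [Real.norm_eq_abs, Real.norm_eq_abs, abs_of_nonneg (hEpos z),
        abs_of_pos (by linarith : (0:ℝ) < z - t)] at hz
      exact hz
    have ev2 : ∀ᶠ z in 𝓝[>] t, z < t + (M + 1)⁻¹ := by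
      apply Filter.Eventually.filter_mono nhdsWithin_le_nhds
      exact gt_mem_nhds (lt_add_of_pos_right t (by positivity))
    have ev3 : ∀ᶠ z in 𝓝[>] t, t < z := self_mem_nhdsWithin
    refine ((ev1.and (ev2.and ev3)).mono ?_).frequently
    rintro z ⟨hz1, hz2, hz3⟩
    have hzt1 : t₁ ≤ z := le_trans ht1 (le_of_lt hz3)
    have hzt : 0 < z - t := by linarith
    -- main estimate
    have hstep : g z ≤ (1 - (z - t) * ℓ) * g t + E z := by
      have tri : ∀ i, p i * |u z i - v z i| ≤
          p i * |(u t i - v t i) + (z - t) * d i|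
          + p i * |u z i - v z i - (u t i - v t i) - (z - t) * d i| := by
        intro i
        rw [← mul_add]
        apply mul_le_mul_of_nonneg_left _ (hp i)
        have habs := abs_add_le (u t i - v t i + (z - t) * d i)
          (u z i - v z i - (u t i - v t i) - (z - t) * d i)
        have heq : (u t i - v t i + (z - t) * d i)
            + (u z i - v z i - (u t i - v t i) - (z - t) * d i) = u z i - v z i := by ring
        rw [heq] at habs
        exact habs
      have hcore := core_step hf hconv p hp ℓ M hM0 hMd hcol
        (huΩ t ht1) (hvΩ t ht1) (le_of_lt hzt)
        (by
          have hM1 : (0:ℝ) < M + 1 := by linarith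
          have h5 : z - t ≤ (M + 1)⁻¹ := by linarith
          calc (z - t) * (M + 1) ≤ (M + 1)⁻¹ * (M + 1) :=
                mul_le_mul_of_nonneg_right h5 (le_of_lt hM1)
            _ = 1 := inv_mul_cancel₀ (ne_of_gt hM1))
      calc g z ≤ ∑ i, (p i * |(u t i - v t i) + (z - t) * d i|
            + p i * |u z i - v z i - (u t i - v t i) - (z - t) * d i|) :=
            Finset.sum_le_sum fun i _ => tri i
        _ = (∑ i, p i * |(u t i - v t i) + (z - t) * d i|) + E z :=
            Finset.sum_add_distrib
        _ ≤ (1 - (z - t) * ℓ) * g t + E z := by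
            have := hcore
            simp only [hddef] at this ⊢
            linarith [this]
    have : (z - t)⁻¹ * (g z - g t) ≤ -ℓ * g t + c := by
      rw [inv_mul_le_iff₀ hzt]
      have := hz1
      nlinarith [hstep, hz1]
    apply lt_of_le_of_lt this
    rw [hcdef]
    linarith

lemma exists_constants {n : ℕ}
    (Ω : Set (Fin n → ℝ)) (hcomp : IsCompact Ω) (hne : Ω.Nonempty)
    (f : (Fin n → ℝ) → (Fin n → ℝ)) (hf : ContDiff ℝ 1 f)
    (S0 Sm : Finset (Fin n)) (hS0 : S0.Nonempty) (hSm : Sm.Nonempty)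
    (h2 : ∀ x ∈ Ω, ∀ j ∈ Sm, cCol (jac f x) j < 0)
    (h3 : ∀ x ∈ Ω, ∀ i ∈ S0, ∃ z ∈ Sm, 0 < jac f x z i) :
    ∃ M ≥ (0:ℝ), ∃ a > (0:ℝ), ∃ m > (0:ℝ),
      (∀ x ∈ Ω, ∀ i j, |jac f x i j| ≤ M) ∧
      (∀ x ∈ Ω, ∀ j ∈ Sm, cCol (jac f x) j ≤ -a) ∧
      (∀ x ∈ Ω, ∀ j ∈ S0, m ≤ ∑ i ∈ Sm, |jac f x i j|) := by
  have habs : ∀ i j : Fin n, Continuous fun x => |jac f x i j| :=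
    fun i j => (jac_continuous hf i j).abs
  -- M
  have hgc : Continuous fun x => ∑ i, ∑ j, |jac f x i j| := by
    apply continuous_finset_sum; intro i _; apply continuous_finset_sum; intro j _
    exact habs i j
  obtain ⟨xM, hxM, hxMmax⟩ := hcomp.exists_isMaxOn hne hgc.continuousOn
  set M := ∑ i, ∑ j, |jac f xM i j| with hMdef
  have hM0 : 0 ≤ M := Finset.sum_nonneg fun i _ => Finset.sum_nonneg fun j _ => abs_nonneg _
  have hMbound : ∀ x ∈ Ω, ∀ i j, |jac f x i j| ≤ M := by
    intro x hx i j
    calc |jac f x i j| ≤ ∑ j', |jac f x i j'| :=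
          Finset.single_le_sum (f := fun j' => |jac f x i j'|) (fun j' _ => abs_nonneg _) (Finset.mem_univ j)
      _ ≤ ∑ i', ∑ j', |jac f x i' j'| :=
          Finset.single_le_sum (f := fun i' => ∑ j', |jac f x i' j'|)
            (fun i' _ => Finset.sum_nonneg fun j' _ => abs_nonneg _) (Finset.mem_univ i)
      _ ≤ M := hxMmax hx
  -- a
  have hcCont : ∀ j : Fin n, Continuous fun x => cCol (jac f x) j := by
    intro j
    unfold cCol
    exact (jac_continuous hf j j).add (continuous_finset_sum _ fun i _ => habs i j)
  have hFc : Continuous fun x => Sm.sup' hSm (fun j => cCol (jac f x) j) :=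
    Continuous.finset_sup'_apply hSm fun j _ => hcCont j
  obtain ⟨xa, hxa, hxamax⟩ := hcomp.exists_isMaxOn hne hFc.continuousOn
  set a := -(Sm.sup' hSm (fun j => cCol (jac f xa) j)) with hadef
  have ha0 : 0 < a := by
    rw [hadef, neg_pos]
    rw [Finset.sup'_lt_iff]
    intro j hj
    exact h2 xa hxa j hj
  have haBound : ∀ x ∈ Ω, ∀ j ∈ Sm, cCol (jac f x) j ≤ -a := by
    intro x hx j hj
    rw [hadef, neg_neg]
    exact (Finset.le_sup' _ hj).trans (hxamax hx)
  -- m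
  have hGc : Continuous fun x => S0.inf' hS0 (fun j => ∑ i ∈ Sm, |jac f x i j|) :=
    Continuous.finset_inf'_apply hS0 fun j _ =>
      continuous_finset_sum _ fun i _ => habs i j
  obtain ⟨xm, hxm, hxmmin⟩ := hcomp.exists_isMinOn hne hGc.continuousOn
  set m := S0.inf' hS0 (fun j => ∑ i ∈ Sm, |jac f xm i j|) with hmdef
  have hm0 : 0 < m := by
    rw [hmdef, Finset.lt_inf'_iff]
    intro j hj
    obtain ⟨z, hz, hzpos⟩ := h3 xm hxm j hj
    calc (0:ℝ) < |jac f xm z j| := by rw [abs_pos]; exact ne_of_gt hzpos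
      _ ≤ ∑ i ∈ Sm, |jac f xm i j| :=
          Finset.single_le_sum (f := fun i => |jac f xm i j|) (fun i _ => abs_nonneg _) hz
  have hmBound : ∀ x ∈ Ω, ∀ j ∈ S0, m ≤ ∑ i ∈ Sm, |jac f x i j| := by
    intro x hx j hj
    exact (hxmmin hx).trans (Finset.inf'_le _ hj)
  exact ⟨M, hM0, a, ha0, m, hm0, hMbound, haBound, hmBound⟩

end Aux

set_option maxHeartbeats 2000000 in
/-- If `{1,…,n}` is partitioned into nonempty sets `S₀`, `S₋` with
`c_k(J(x)) ≤ 0` on `S₀`, `c_j(J(x)) < 0` on `S₋`, and for every `i ∈ S₀` some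
`z ∈ S₋` has `J(x)_{z i} > 0`, then `ẋ = f(x)` is SOST on `Ω` w.r.t. the `L¹` norm. -/
theorem sost_L1_from_column_conditions {n : ℕ}
    (Ω : Set (Fin n → ℝ)) (hcomp : IsCompact Ω) (hconv : Convex ℝ Ω)
    (f : (Fin n → ℝ) → (Fin n → ℝ)) (hf : ContDiff ℝ 1 f)
    (S0 Sm : Finset (Fin n)) (hS0 : S0.Nonempty) (hSm : Sm.Nonempty)
    (hdisj : Disjoint S0 Sm) (hcover : S0 ∪ Sm = Finset.univ)
    (h1 : ∀ x ∈ Ω, ∀ k ∈ S0, cCol (jac f x) k ≤ 0)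
    (h2 : ∀ x ∈ Ω, ∀ j ∈ Sm, cCol (jac f x) j < 0)
    (h3 : ∀ x ∈ Ω, ∀ i ∈ S0, ∃ z ∈ Sm, 0 < jac f x z i) :
    ∀ ε > (0:ℝ), ∀ τ > (0:ℝ), ∃ ℓ > (0:ℝ), ∀ t₁ ≥ (0:ℝ), ∀ u v : ℝ → (Fin n → ℝ),
      (∀ t ≥ t₁, u t ∈ Ω) → (∀ t ≥ t₁, HasDerivWithinAt u (f (u t)) (Set.Ici t₁) t) →
      (∀ t ≥ t₁, v t ∈ Ω) → (∀ t ≥ t₁, HasDerivWithinAt v (f (v t)) (Set.Ici t₁) t) →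
      ∀ t₂ ≥ t₁,
        ∑ i, |u (t₂ + τ) i - v (t₂ + τ) i| ≤
          (1 + ε) * Real.exp (-ℓ * (t₂ - t₁)) * ∑ i, |u t₁ i - v t₁ i| := by
  intro ε hε τ hτ
  by_cases hne : Ω.Nonempty
  case neg =>
    refine ⟨1, one_pos, fun t₁ ht₁ u v huΩ hu hvΩ hv t₂ ht₂ => ?_⟩
    exact absurd (huΩ t₁ le_rfl) (fun h => hne ⟨u t₁, h⟩)
  obtain ⟨M, hM0, a, ha0, m, hm0, hMd, haB, hmB⟩ :=
    exists_constants Ω hcomp hne f hf S0 Sm hS0 hSm h2 h3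
  have hn0 : (0:ℝ) ≤ (n:ℝ) := Nat.cast_nonneg n
  set δ : ℝ := min (ε / (1 + ε)) (a / (a + 2 * n * M + 1)) with hδdef
  have hδ0 : 0 < δ := lt_min (by positivity) (by positivity)
  have hδa : δ * (a + 2 * n * M + 1) ≤ a := by
    have hle : δ ≤ a / (a + 2 * n * M + 1) := min_le_right _ _
    have hd : (0:ℝ) < a + 2 * n * M + 1 := by positivity
    rw [le_div_iff₀ hd] at hle
    exact hle
  have hδ1 : δ < 1 := by nlinarith [mul_nonneg hn0 hM0]
  have hδε : δ * (1 + ε) ≤ ε := by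
    have hle : δ ≤ ε / (1 + ε) := min_le_left _ _
    rw [le_div_iff₀ (by linarith)] at hle
    exact hle
  set p : Fin n → ℝ := fun i => if i ∈ Sm then 1 - δ else 1 with hpdef
  have hp0 : ∀ i, 0 ≤ p i := by
    intro i; by_cases h : i ∈ Sm <;> simp [hpdef, h] <;> linarith
  have hp1 : ∀ i, p i ≤ 1 := by
    intro i; by_cases h : i ∈ Sm <;> simp [hpdef, h] <;> linarith
  have hplow : ∀ i, 1 - δ ≤ p i := by
    intro i; by_cases h : i ∈ Sm <;> simp [hpdef, h] <;> linarith
  set ℓ : ℝ := min (δ * m) (a / 2) with hℓdef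
  have hℓ0 : 0 < ℓ := lt_min (by positivity) (by linarith)
  have hℓa : ℓ ≤ a / 2 := min_le_right _ _
  have hℓm : ℓ ≤ δ * m := min_le_left _ _
  refine ⟨ℓ, hℓ0, ?_⟩
  intro t₁ ht₁ u v huΩ hu hvΩ hv t₂ ht₂
  have hcol : ∀ x ∈ Ω, ∀ j, p j * jac f x j j
      + ∑ i ∈ Finset.univ.erase j, p i * |jac f x i j| ≤ -ℓ * p j := by
    intro x hx j
    by_cases hj : j ∈ Sm
    · -- j ∈ Sm
      have hpj : p j = 1 - δ := by simp [hpdef, hj]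
      have hS : ∑ i ∈ Finset.univ.erase j, |jac f x i j| ≤ (n:ℝ) * M := by
        calc ∑ i ∈ Finset.univ.erase j, |jac f x i j|
            ≤ ∑ i, |jac f x i j| :=
              Finset.sum_le_sum_of_subset_of_nonneg (Finset.subset_univ _)
                (fun i _ _ => abs_nonneg _)
          _ ≤ (n:ℝ) * M := by
              have := Finset.sum_le_card_nsmul Finset.univ (fun i => |jac f x i j|) M
                (fun i _ => hMd x hx i j)
              simpa [Finset.card_univ, nsmul_eq_mul] using this
      have hS0' : 0 ≤ ∑ i ∈ Finset.univ.erase j, |jac f x i j| :=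
        Finset.sum_nonneg fun i _ => abs_nonneg _
      have hsum2 : ∑ i ∈ Finset.univ.erase j, p i * |jac f x i j|
          ≤ (1 - δ) * (∑ i ∈ Finset.univ.erase j, |jac f x i j|) + δ * ((n:ℝ) * M) := by
        have h1' : ∑ i ∈ Finset.univ.erase j, p i * |jac f x i j|
            ≤ ∑ i ∈ Finset.univ.erase j, |jac f x i j| :=
          Finset.sum_le_sum fun i _ => by
            nlinarith [hp1 i, hp0 i, abs_nonneg (jac f x i j)]
        nlinarith [hS, hδ0.le]
      have hc := haB x hx j hj
      unfold cCol at hc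
      rw [hpj]
      nlinarith [hsum2, hc, hδa, hℓa, hδ1, mul_nonneg hn0 hM0, hδ0.le, hS0']
    · -- j ∈ S0
      have hj0 : j ∈ S0 := by
        have := Finset.mem_union.1 (hcover ▸ Finset.mem_univ j)
        tauto
      have hpj : p j = 1 := by simp [hpdef, hj]
      have hSmsub : Sm ⊆ Finset.univ.erase j := fun i hi =>
        Finset.mem_erase.2 ⟨fun he => hj (he ▸ hi), Finset.mem_univ i⟩
      have hid : ∑ i ∈ Finset.univ.erase j, p i * |jac f x i j|
          + δ * ∑ i ∈ Sm, |jac f x i j|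
          = ∑ i ∈ Finset.univ.erase j, |jac f x i j| := by
        have hδs : δ * ∑ i ∈ Sm, |jac f x i j|
            = ∑ i ∈ Finset.univ.erase j, (if i ∈ Sm then δ else 0) * |jac f x i j| := by
          rw [Finset.mul_sum]
          calc ∑ i ∈ Sm, δ * |jac f x i j|
              = ∑ i ∈ Sm, (if i ∈ Sm then δ else 0) * |jac f x i j| :=
                Finset.sum_congr rfl fun i hi => by rw [if_pos hi]
            _ = ∑ i ∈ Finset.univ.erase j, (if i ∈ Sm then δ else 0) * |jac f x i j| :=
                Finset.sum_subset hSmsub (fun i _ hni => by rw [if_neg hni, zero_mul])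
        rw [hδs, ← Finset.sum_add_distrib]
        refine Finset.sum_congr rfl fun i hi => ?_
        by_cases hiSm : i ∈ Sm
        · simp only [hpdef, if_pos hiSm]
          ring
        · simp only [hpdef, if_neg hiSm]
          ring
      have hcC := h1 x hx j hj0
      unfold cCol at hcC
      have hm' := hmB x hx j hj0
      have hδm : δ * m ≤ δ * ∑ i ∈ Sm, |jac f x i j| :=
        mul_le_mul_of_nonneg_left hm' hδ0.le
      rw [hpj]
      linarith [hid, hcC, hδm, hℓm]
  have hdecay := gronwall_decay hf hconv p hp0 ℓ M hM0 hMd hcol t₁ (t₂ + τ)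
    (by linarith) u v huΩ hu hvΩ hv
  have hL : ∑ i, |u (t₂ + τ) i - v (t₂ + τ) i|
      ≤ (1 + ε) * ∑ i, p i * |u (t₂ + τ) i - v (t₂ + τ) i| := by
    rw [Finset.mul_sum]
    refine Finset.sum_le_sum fun i _ => ?_
    have h1' : 1 ≤ (1 + ε) * p i := by nlinarith [hδε, hplow i]
    nlinarith [abs_nonneg (u (t₂ + τ) i - v (t₂ + τ) i), h1']
  have hR : ∑ i, p i * |u t₁ i - v t₁ i| ≤ ∑ i, |u t₁ i - v t₁ i| :=
    Finset.sum_le_sum fun i _ => by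
      nlinarith [hp1 i, hp0 i, abs_nonneg (u t₁ i - v t₁ i)]
  have hexp : Real.exp (-ℓ * (t₂ + τ - t₁)) ≤ Real.exp (-ℓ * (t₂ - t₁)) :=
    Real.exp_le_exp.2 (by nlinarith [hℓ0, hτ])
  calc ∑ i, |u (t₂ + τ) i - v (t₂ + τ) i|
      ≤ (1 + ε) * ∑ i, p i * |u (t₂ + τ) i - v (t₂ + τ) i| := hL
    _ ≤ (1 + ε) * ((∑ i, p i * |u t₁ i - v t₁ i|) * Real.exp (-ℓ * (t₂ + τ - t₁))) :=
        mul_le_mul_of_nonneg_left hdecay (by linarith)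
    _ ≤ (1 + ε) * ((∑ i, |u t₁ i - v t₁ i|) * Real.exp (-ℓ * (t₂ - t₁))) := by
        apply mul_le_mul_of_nonneg_left _ (by linarith : (0:ℝ) ≤ 1 + ε)
        exact mul_le_mul hR hexp (Real.exp_pos _).le
          (Finset.sum_nonneg fun i _ => abs_nonneg _)
    _ = (1 + ε) * Real.exp (-ℓ * (t₂ - t₁)) * ∑ i, |u t₁ i - v t₁ i| := by ring
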